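/- Let b ≥ 2, n ≥ 2, k ≥ 0, d ≥ 1 be integers with d dividing n − 1 and gcd(b, d) = 1, and let ω ∈ ℂ be a primitive d-th root of unity. Let X_b^n[k] be the set of tuples (x_1, …, x_n) ∈ {0, 1, …, b−1}^n with x_1 + ⋯ + x_n = k, and let τ be the permutation of such tuples defined by τ·(x_1, x_2, …, x_n) = (x_2, …, x_{n−1}, x_1, x_n), which cycles the first n − 1 coordinates and fixes the last. Then the coefficient of t^k in the polynomial ∏_{i=0}^{n−1} (1 + ω^i t + (ω^i t)^2 + ⋯ + (ω^i t)^(b−1)) ∈ ℂ[t] equals the number of elements of X_b^n[k] fixed by τ^((n−1)/d). -/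

import Mathlib

open Polynomial Finset


-- periodic product lemma
private lemma prod_period {M : Type*} [CommMonoid M] (f : ℕ → M) (p : ℕ) :
    ∀ m : ℕ, (∀ q < m, ∀ r < p, f (q * p + r) = f r) →
      ∏ i ∈ range (m * p), f i = (∏ r ∈ range p, f r) ^ m := by
  intro m
  induction m with
  | zero => simp
  | succ m ih =>
    intro h
    rw [Nat.succ_mul, Finset.prod_range_add, ih (fun q hq => h q (by omega)), pow_succ]
    congr 1
    exact Finset.prod_congr rfl fun r hr => h m (by omega) r (mem_range.mp hr)

private lemma sum_period (f : ℕ → ℕ) (p : ℕ) :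
    ∀ m : ℕ, (∀ q < m, ∀ r < p, f (q * p + r) = f r) →
      ∑ i ∈ range (m * p), f i = m * ∑ r ∈ range p, f r := by
  intro m
  induction m with
  | zero => simp
  | succ m ih =>
    intro h
    rw [Nat.succ_mul, Finset.sum_range_add, ih (fun q hq => h q (by omega)), Nat.succ_mul]
    congr 1
    exact Finset.sum_congr rfl fun r hr => h m (by omega) r (mem_range.mp hr)

private lemma prodXsub {d : ℕ} (hd : 0 < d) {ζ : ℂ} (hζ : IsPrimitiveRoot ζ d) :
    ∏ i ∈ range d, (X - C (ζ ^ i)) = X ^ d - 1 := by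
  classical
  have h1 := Polynomial.X_pow_sub_one_eq_prod hd hζ
  have h2 : nthRootsFinset d (1 : ℂ) = (range d).image (ζ ^ ·) := by
    rw [nthRootsFinset_def, hζ.nthRoots_eq (one_pow d)]
    simp only [mul_one]
    rw [Multiset.toFinset_map]
    congr 1
    ext x
    simp [Multiset.mem_toFinset]
  rw [h1, h2, Finset.prod_image]
  intro x hx y hy hxy
  exact hζ.injOn_pow (by simpa using hx) (by simpa using hy) hxy

private lemma prodOneSub {d : ℕ} (hd : 0 < d) {ζ : ℂ} (hζ : IsPrimitiveRoot ζ d) :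
    ∏ i ∈ range d, (1 - C (ζ ^ i) * X) = 1 - X ^ d := by
  have hroot := prodXsub hd hζ
  have hprodroots : ∏ i ∈ range d, (-(ζ ^ i)) = -1 := by
    have h := congrArg (Polynomial.eval 0) hroot
    simpa [eval_prod, zero_pow hd.ne'] using h
  have key : ∀ i ∈ range d,
      (1 - C (ζ ^ i) * X) = C (-(ζ ^ i)) * (X - C (ζ ^ ((d - i) % d))) := by
    intro i hi
    rw [mem_range] at hi
    have hz : ζ ^ i * ζ ^ ((d - i) % d) = 1 := by
      rcases Nat.eq_zero_or_pos i with h0 | h0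
      · simp [h0, Nat.mod_self]
      · have h1 : (d - i) % d = d - i := Nat.mod_eq_of_lt (by omega)
        rw [h1, ← pow_add, show i + (d - i) = d by omega, hζ.pow_eq_one]
    have hC : C (ζ ^ i) * C (ζ ^ ((d - i) % d)) = 1 := by rw [← C_mul, hz, C_1]
    simp only [map_neg]
    linear_combination -hC
  rw [Finset.prod_congr rfl key, Finset.prod_mul_distrib, ← map_prod, hprodroots]
  have hre : ∏ i ∈ range d, (X - C (ζ ^ ((d - i) % d))) = ∏ i ∈ range d, (X - C (ζ ^ i)) := by
    refine Finset.prod_nbij' (fun a => (d - a) % d) (fun a => (d - a) % d) ?_ ?_ ?_ ?_ ?_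
    · intro a ha; simp only [Finset.mem_range] at *; exact Nat.mod_lt _ hd
    · intro a ha; simp only [Finset.mem_range] at *; exact Nat.mod_lt _ hd
    · intro a ha; simp only [Finset.mem_range] at ha
      rcases Nat.eq_zero_or_pos a with h0 | h0
      · subst h0; simp [Nat.mod_self]
      · rw [Nat.mod_eq_of_lt (show d - a < d by omega), Nat.mod_eq_of_lt (by omega)]; omega
    · intro a ha; simp only [Finset.mem_range] at ha
      rcases Nat.eq_zero_or_pos a with h0 | h0
      · subst h0; simp [Nat.mod_self]
      · rw [Nat.mod_eq_of_lt (show d - a < d by omega), Nat.mod_eq_of_lt (by omega)]; omega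
    · intro a ha; rfl
  rw [hre, hroot]
  simp only [map_neg, map_one]
  ring

private lemma prodOneSubY {d : ℕ} (hd : 0 < d) {ζ : ℂ} (hζ : IsPrimitiveRoot ζ d) (Y : ℂ[X]) :
    ∏ i ∈ range d, (1 - C (ζ ^ i) * Y) = 1 - Y ^ d := by
  have h := congrArg (fun p => p.comp Y) (prodOneSub hd hζ)
  simpa [Polynomial.prod_comp] using h

private lemma lemA {b d : ℕ} (hd : 0 < d) (hbd : Nat.Coprime b d) {ζ : ℂ}
    (hζ : IsPrimitiveRoot ζ d) :
    ∏ i ∈ range d, (∑ j ∈ range b, (C (ζ ^ i) * X) ^ j) = ∑ j ∈ range b, ((X : ℂ[X]) ^ d) ^ j := by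
  have hne : (1 - X ^ d : ℂ[X]) ≠ 0 := by
    intro h
    have h2 := congrArg (fun p => p.coeff d) h
    simp [coeff_one, hd.ne'] at h2
  have hgeo : ∀ x : ℂ[X], (1 - x) * ∑ j ∈ range b, x ^ j = 1 - x ^ b := by
    intro x
    have h := geom_sum_mul x b
    linear_combination -h
  apply mul_left_cancel₀ hne
  calc (1 - X ^ d : ℂ[X]) * ∏ i ∈ range d, (∑ j ∈ range b, (C (ζ ^ i) * X) ^ j)
      = (∏ i ∈ range d, (1 - C (ζ ^ i) * X)) *
          ∏ i ∈ range d, (∑ j ∈ range b, (C (ζ ^ i) * X) ^ j) := by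
        rw [prodOneSubY hd hζ X]
    _ = ∏ i ∈ range d, ((1 - C (ζ ^ i) * X) * ∑ j ∈ range b, (C (ζ ^ i) * X) ^ j) := by
        rw [Finset.prod_mul_distrib]
    _ = ∏ i ∈ range d, (1 - C ((ζ ^ b) ^ i) * X ^ b) := by
        refine Finset.prod_congr rfl fun i _ => ?_
        rw [hgeo]
        congr 1
        rw [mul_pow, ← C_pow, ← pow_mul, ← pow_mul, Nat.mul_comm]
    _ = 1 - (X ^ b) ^ d := prodOneSubY hd (hζ.pow_of_coprime b hbd) (X ^ b)
    _ = (1 - X ^ d) * ∑ j ∈ range b, ((X : ℂ[X]) ^ d) ^ j := by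
        rw [hgeo, ← pow_mul, ← pow_mul, Nat.mul_comm]

set_option maxHeartbeats 2000000 in
private lemma card_eq {b n k d m : ℕ} (hm : 0 < m) (hd : 0 < d)
    (hn : n - 1 = m * d) (hn2 : 2 ≤ n) :
    Nat.card {x : Fin n → Fin b //
        (∑ i, (x i : ℕ)) = k ∧
        ∀ i : Fin n, (i : ℕ) < n - 1 →
          x ⟨((i : ℕ) + m) % (n - 1), lt_trans (Nat.mod_lt _ (by omega)) (by omega)⟩ = x i}
      = Nat.card {p : (Fin m → Fin b) × Fin b //
          d * (∑ i, ((p.1 i : ℕ))) + (p.2 : ℕ) = k} := by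
  have hNpos : 0 < n - 1 := by omega
  have hmN : m ≤ n - 1 := by rw [hn]; exact Nat.le_mul_of_pos_right _ hd
  -- extension of x to ℕ
  let E : (Fin n → Fin b) → ℕ → Fin b := fun x i => x ⟨i % n, Nat.mod_lt _ (by omega)⟩
  have hE : ∀ (x : Fin n → Fin b) (a : ℕ) (h : a < n), E x a = x ⟨a, h⟩ := by
    intro x a h
    simp only [E]
    congr 1
    exact Fin.ext (Nat.mod_eq_of_lt h)
  have hE' : ∀ (x : Fin n → Fin b) (i : Fin n), E x (i : ℕ) = x i := by
    intro x i
    rw [hE x _ i.isLt]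
  -- the fix condition implies the E-version
  have step : ∀ x : Fin n → Fin b,
      (∀ i : Fin n, (i : ℕ) < n - 1 →
        x ⟨((i : ℕ) + m) % (n - 1), lt_trans (Nat.mod_lt _ (by omega)) (by omega)⟩ = x i) →
      ∀ i, i < n - 1 → E x ((i + m) % (n - 1)) = E x i := by
    intro x hx i hi
    have h1 := hx ⟨i, by omega⟩ (by simpa using hi)
    rw [hE x ((i + m) % (n - 1)) (lt_trans (Nat.mod_lt _ hNpos) (by omega)), hE x i (by omega)]
    exact h1
  have iter : ∀ x : Fin n → Fin b,
      (∀ i, i < n - 1 → E x ((i + m) % (n - 1)) = E x i) →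
      ∀ t i, i < n - 1 → E x ((i + t * m) % (n - 1)) = E x i := by
    intro x hx t
    induction t with
    | zero => intro i hi; simp [Nat.mod_eq_of_lt hi]
    | succ t ih =>
      intro i hi
      have h1 := hx ((i + t * m) % (n - 1)) (Nat.mod_lt _ hNpos)
      have h2 := ih i hi
      have e : ((i + t * m) % (n - 1) + m) % (n - 1) = (i + (t + 1) * m) % (n - 1) := by
        rw [Nat.mod_add_mod]
        congr 1
        ring
      rw [e] at h1
      rw [h1, h2]
  have fix' : ∀ x : Fin n → Fin b,
      (∀ i, i < n - 1 → E x ((i + m) % (n - 1)) = E x i) →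
      ∀ i, i < n - 1 → E x i = E x (i % m) := by
    intro x hx i hi
    have h1 := iter x hx (i / m) (i % m) (lt_of_lt_of_le (Nat.mod_lt _ hm) hmN)
    have e : (i % m + i / m * m) % (n - 1) = i := by
      rw [Nat.mod_add_div']
      exact Nat.mod_eq_of_lt hi
    rw [e] at h1
    exact h1
  have sumf : ∀ x : Fin n → Fin b,
      (∀ i, i < n - 1 → E x i = E x (i % m)) →
      (∑ i, (x i : ℕ)) = d * (∑ r ∈ range m, (E x r : ℕ)) + (E x (n - 1) : ℕ) := by
    intro x hx
    have h0 : (∑ i, (x i : ℕ)) = ∑ i ∈ range n, (E x i : ℕ) := by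
      rw [← Fin.sum_univ_eq_sum_range (fun i => (E x i : ℕ)) n]
      exact Finset.sum_congr rfl fun i _ => by rw [hE' x i]
    have h1 : range n = range ((n - 1) + 1) := by congr 1; omega
    rw [h0, h1, Finset.sum_range_succ]
    congr 1
    rw [show (n - 1 : ℕ) = d * m by rw [hn, Nat.mul_comm]]
    refine sum_period (fun i => (E x i : ℕ)) m d fun q hq r hr => ?_
    have hlt : q * m + r < n - 1 := by
      have h2 : q * m + r < (q + 1) * m := by rw [add_one_mul]; omega
      have h3 : (q + 1) * m ≤ d * m := Nat.mul_le_mul_right m (by omega)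
      have h5 : d * m = m * d := Nat.mul_comm d m
      omega
    have h4 := hx (q * m + r) hlt
    show (E x (q * m + r) : ℕ) = (E x r : ℕ)
    rw [h4]
    have h6 : (q * m + r) % m = r := by
      rw [Nat.add_comm, Nat.add_mul_mod_self_right, Nat.mod_eq_of_lt hr]
    rw [h6]
  apply Nat.card_congr
  refine
    { toFun := fun x => ⟨⟨fun r => x.1 ⟨(r : ℕ), by omega⟩, x.1 ⟨n - 1, by omega⟩⟩, ?_⟩
      invFun := fun p => ⟨fun i => if h : (i : ℕ) < n - 1 then
          p.1.1 ⟨(i : ℕ) % m, Nat.mod_lt _ hm⟩ else p.1.2, ?_, ?_⟩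
      left_inv := ?_
      right_inv := ?_ }
  · -- toFun property
    obtain ⟨x, hsum, hfix⟩ := x
    have hEfix := step x hfix
    have h1 := sumf x (fix' x hEfix)
    rw [hsum] at h1
    dsimp only
    refine Eq.trans ?_ h1.symm
    congr 1
    · congr 1
      rw [← Fin.sum_univ_eq_sum_range (fun r => (E x r : ℕ)) m]
      refine Finset.sum_congr rfl fun r _ => ?_
      rw [hE x (↑r : ℕ) (lt_of_lt_of_le r.isLt (by omega))]
    · rw [hE x (n - 1) (by omega)]
  · -- invFun sum property
    obtain ⟨⟨y, z⟩, hp⟩ := p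
    set bx : Fin n → Fin b := fun i => if h : (i : ℕ) < n - 1 then
        y ⟨(i : ℕ) % m, Nat.mod_lt _ hm⟩ else z with hbx
    have hbxE1 : ∀ a, a < n - 1 → E bx a = y ⟨a % m, Nat.mod_lt _ hm⟩ := by
      intro a ha
      rw [hE bx a (by omega)]
      simp only [hbx]
      rw [dif_pos ha]
    have hbxE2 : E bx (n - 1) = z := by
      rw [hE bx (n - 1) (by omega)]
      simp only [hbx]
      rw [dif_neg (by omega)]
    have hfix' : ∀ i, i < n - 1 → E bx i = E bx (i % m) := by
      intro i hi
      rw [hbxE1 i hi, hbxE1 (i % m) (lt_of_lt_of_le (Nat.mod_lt _ hm) hmN)]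
      refine congrArg y (Fin.ext ?_)
      exact (Nat.mod_mod_of_dvd i (dvd_refl m)).symm
    have h1 := sumf bx hfix'
    have h2 : ∑ r ∈ range m, (E bx r : ℕ) = ∑ r : Fin m, (y r : ℕ) := by
      rw [← Fin.sum_univ_eq_sum_range (fun r => (E bx r : ℕ)) m]
      refine Finset.sum_congr rfl fun r _ => ?_
      rw [hbxE1 (r : ℕ) (lt_of_lt_of_le r.isLt hmN)]
      exact congrArg (fun t => ((y t : Fin b) : ℕ)) (Fin.ext (Nat.mod_eq_of_lt r.isLt))
    show ∑ i, (bx i : ℕ) = k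
    rw [h1, h2, hbxE2, hp]
  · -- invFun fix property
    obtain ⟨⟨y, z⟩, hp⟩ := p
    intro i hi
    dsimp only
    rw [dif_pos hi]
    have hlt : ((i : ℕ) + m) % (n - 1) < n - 1 := Nat.mod_lt _ hNpos
    rw [dif_pos hlt]
    congr 1
    refine Fin.ext ?_
    show ((i : ℕ) + m) % (n - 1) % m = (i : ℕ) % m
    rw [Nat.mod_mod_of_dvd _ ⟨d, hn⟩, Nat.add_mod_right]
  · -- left_inv
    intro xx
    obtain ⟨x, hsum, hfix⟩ := xx
    apply Subtype.ext
    funext i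
    dsimp only
    by_cases hi : (i : ℕ) < n - 1
    · rw [dif_pos hi]
      have h := fix' x (step x hfix) (i : ℕ) hi
      rw [← hE x ((i : ℕ) % m) (lt_of_lt_of_le (Nat.mod_lt _ hm) (by omega)), ← h, hE' x i]
    · rw [dif_neg hi]
      congr 1
      exact Fin.ext (by simp; omega)
  · -- right_inv
    intro pp
    obtain ⟨⟨y, z⟩, hp⟩ := pp
    apply Subtype.ext
    dsimp only
    refine Prod.ext ?_ ?_
    · funext r
      dsimp only
      rw [dif_pos (lt_of_lt_of_le r.isLt hmN)]
      exact congrArg y (Fin.ext (Nat.mod_eq_of_lt r.isLt))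
    · dsimp only
      rw [dif_neg (by omega : ¬ (n - 1 < n - 1))]

/-- **Theorem (Cyclic Sieving, near-rotation case, algebraic side).**
If `d ∣ (n-1)`, `gcd(b,d) = 1` and `ω` is a primitive `d`th root of unity, then the
coefficient of `t^k` in `∏_{i=0}^{n-1} (1 + ω^i t + ⋯ + (ω^i t)^(b-1))` equals the number
of tuples `(x_1, …, x_n) ∈ {0, …, b-1}^n` with `∑ x_i = k` fixed by the `((n-1)/d)`-th
power of the permutation `τ` which cyclically rotates the first `n-1` coordinates and fixes
the last: such tuples are exactly those with `x_{(i + (n-1)/d) mod (n-1)} = x_i` for all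
indices `i < n-1` (0-indexed). -/
theorem stmt_7 (b d n k : ℕ) (hb : 2 ≤ b) (hd : 1 ≤ d) (hn : 2 ≤ n) (hdn : d ∣ (n - 1))
    (hbd : Nat.gcd b d = 1) (ω : ℂ) (hω : IsPrimitiveRoot ω d) :
    (∏ i ∈ Finset.range n, (∑ j ∈ Finset.range b, C ((ω ^ i) ^ j) * X ^ j)).coeff k =
      (Nat.card {x : Fin n → Fin b //
        (∑ i, (x i : ℕ)) = k ∧
        ∀ i : Fin n, (i : ℕ) < n - 1 →
          x ⟨((i : ℕ) + (n - 1) / d) % (n - 1),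
              lt_trans (Nat.mod_lt _ (by omega)) (by omega)⟩ = x i} : ℂ) := by
  classical
  have hd0 : 0 < d := hd
  set m := (n - 1) / d with hmdef
  have hn1 : n - 1 = m * d := (Nat.div_mul_cancel hdn).symm
  have hm0 : 0 < m := Nat.div_pos (Nat.le_of_dvd (by omega) hdn) hd0
  -- Step 1: rewrite factors
  have hQrw : ∏ i ∈ range n, (∑ j ∈ range b, C ((ω ^ i) ^ j) * X ^ j)
      = ∏ i ∈ range n, (∑ j ∈ range b, (C (ω ^ i) * X) ^ j) := by
    refine Finset.prod_congr rfl fun i _ => Finset.sum_congr rfl fun j _ => ?_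
    rw [mul_pow, ← C_pow]
  -- Step 2: split the product
  have hsplit : ∏ i ∈ range n, (∑ j ∈ range b, (C (ω ^ i) * X) ^ j)
      = ((∑ j ∈ range b, ((X : ℂ[X]) ^ d) ^ j) ^ m) * (∑ j ∈ range b, (X : ℂ[X]) ^ j) := by
    rw [show range n = range ((n - 1) + 1) by congr 1; omega, Finset.prod_range_succ]
    congr 1
    · rw [hn1, prod_period _ d m ?_, lemA hd0 hbd hω]
      intro q hq r hr
      have : ω ^ (q * d + r) = ω ^ r := by
        rw [pow_add, mul_comm q d, pow_mul, hω.pow_eq_one, one_pow, one_mul]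
      rw [this]
    · obtain ⟨c, hc⟩ := hdn
      have : ω ^ (n - 1) = 1 := by rw [hc, pow_mul, hω.pow_eq_one, one_pow]
      rw [this]
      refine Finset.sum_congr rfl fun j _ => ?_
      rw [map_one, one_mul]
  -- Step 3: expand into monomials
  have hexp : ((∑ j ∈ range b, ((X : ℂ[X]) ^ d) ^ j) ^ m) * (∑ j ∈ range b, (X : ℂ[X]) ^ j)
      = ∑ y : Fin m → Fin b, ∑ z : Fin b,
          (X : ℂ[X]) ^ (d * (∑ i, (y i : ℕ)) + (z : ℕ)) := by
    have hA : (∑ j ∈ range b, ((X : ℂ[X]) ^ d) ^ j) = ∑ j : Fin b, (X : ℂ[X]) ^ (d * (j : ℕ)) := by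
      rw [← Fin.sum_univ_eq_sum_range (fun j => ((X : ℂ[X]) ^ d) ^ j) b]
      exact Finset.sum_congr rfl fun j _ => (pow_mul X d (j : ℕ)).symm
    have hB : (∑ j ∈ range b, (X : ℂ[X]) ^ j) = ∑ z : Fin b, (X : ℂ[X]) ^ (z : ℕ) :=
      (Fin.sum_univ_eq_sum_range (fun j => (X : ℂ[X]) ^ j) b).symm
    rw [hA, hB]
    have hpow : (∑ j : Fin b, (X : ℂ[X]) ^ (d * (j : ℕ))) ^ m
        = ∑ y : Fin m → Fin b, (X : ℂ[X]) ^ (d * (∑ i, (y i : ℕ))) := by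
      rw [← Fin.prod_const m (∑ j : Fin b, (X : ℂ[X]) ^ (d * (j : ℕ)))]
      rw [Finset.prod_univ_sum]
      rw [Fintype.piFinset_univ]
      refine Finset.sum_congr rfl fun y _ => ?_
      rw [Finset.prod_pow_eq_pow_sum]
      congr 1
      rw [Finset.mul_sum]
    rw [hpow, Finset.sum_mul_sum]
    refine Finset.sum_congr rfl fun y _ => Finset.sum_congr rfl fun z _ => ?_
    rw [← pow_add]
  -- Step 4: take coefficients
  have hcoeff : (∑ y : Fin m → Fin b, ∑ z : Fin b,
        (X : ℂ[X]) ^ (d * (∑ i, (y i : ℕ)) + (z : ℕ))).coeff k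
      = (Nat.card {p : (Fin m → Fin b) × Fin b //
          d * (∑ i, ((p.1 i : ℕ))) + (p.2 : ℕ) = k} : ℂ) := by
    rw [Polynomial.finset_sum_coeff]
    simp_rw [Polynomial.finset_sum_coeff, Polynomial.coeff_X_pow]
    rw [← Finset.sum_product']
    rw [Finset.univ_product_univ]
    rw [Finset.sum_boole]
    rw [Nat.card_eq_fintype_card, Fintype.card_subtype]
    congr 2
    apply Finset.filter_congr
    intro p _
    exact eq_comm
  rw [hQrw, hsplit, hexp, hcoeff]
  rw [card_eq hm0 hd0 hn1 hn]
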